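/- Let G be a hyperDAG on n nodes and let d_1 ≤ d_2 ≤ … ≤ d_n be the degrees of its nodes sorted in nondecreasing order, where the degree of a node is the number of hyperedges containing it. Then d_i ≤ i for every i ∈ [n]; equivalently, for every i ∈ [n] there are at least i nodes of degree at most i. -/

import Mathlib

open Finset

/-- A hypergraph (given by its finite edge set `E` over the node type `α`) is a
*hyperDAG* if there is an acyclic directed graph (a relation `r` with no cycles) on the
same node set whose hyperDAG representation is exactly `E`: the hyperedges are the sets
`{u} ∪ S_u` for every node `u` with nonempty successor set `S_u = {v | r u v}`. -/
def IsHyperDAG {α : Type*} (E : Finset (Finset α)) : Prop :=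
  ∃ r : α → α → Prop, (∀ x : α, ¬ Relation.TransGen r x x) ∧
    ∀ s : Finset α, s ∈ E ↔ ∃ u : α, (∃ v, r u v) ∧ (s : Set α) = insert u {v | r u v}

/-- **Degree sequence of a hyperDAG.**  In a hyperDAG on `n` nodes, the `i`-th smallest
degree is at most `i`; equivalently, for every `i ∈ [n]` there are at least `i` nodes of
degree at most `i` (the degree of `v` being the number of hyperedges containing `v`). -/
theorem hyperDAG_degree_sequence {α : Type*} [Fintype α] [DecidableEq α]
    (E : Finset (Finset α)) (h : IsHyperDAG E) :
    ∀ i : ℕ, 1 ≤ i → i ≤ Fintype.card α →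
      i ≤ (Finset.univ.filter fun v : α => (E.filter fun e => v ∈ e).card ≤ i).card := by
  classical
  obtain ⟨r, hacyc, hE⟩ := h
  have hwf : WellFounded (Relation.TransGen r) := by
    have h1 : IsIrrefl α (Relation.TransGen r) := ⟨hacyc⟩
    have h2 : IsTrans α (Relation.TransGen r) := ⟨fun _ _ _ => Relation.TransGen.trans⟩
    exact Finite.wellFounded_of_trans_of_irrefl _
  -- build predecessor-closed sets of each size
  have key : ∀ i : ℕ, i ≤ Fintype.card α → ∃ T : Finset α, T.card = i ∧
      ∀ u v : α, r u v → v ∈ T → u ∈ T := by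
    intro i
    induction i with
    | zero => exact fun _ => ⟨∅, rfl, by simp⟩
    | succ i ih =>
      intro hi
      obtain ⟨T, hcard, hclosed⟩ := ih (le_trans (Nat.le_succ i) hi)
      have hne : ((↑(Tᶜ) : Set α)).Nonempty := by
        rw [Finset.coe_nonempty, ← Finset.card_pos, Finset.card_compl, hcard]
        omega
      obtain ⟨v, hv, hmin⟩ := hwf.has_min _ hne
      have hvT : v ∉ T := by simpa using hv
      refine ⟨insert v T, by rw [Finset.card_insert_of_notMem hvT, hcard], ?_⟩
      intro u w hr hw
      rcases Finset.mem_insert.mp hw with hwv | hwT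
      · subst hwv
        by_cases huT : u ∈ T
        · exact Finset.mem_insert_of_mem huT
        · exact absurd (Relation.TransGen.single hr)
            (hmin u (by simpa using huT))
      · exact Finset.mem_insert_of_mem (hclosed u w hr hwT)
  intro i _ hin
  obtain ⟨T, hcard, hclosed⟩ := key i hin
  -- each vertex in T has degree ≤ i
  have hdeg : ∀ v ∈ T, (E.filter fun e => v ∈ e).card ≤ i := by
    intro v hvT
    set f : Finset α → α := fun e =>
      if he : e ∈ E then Classical.choose ((hE e).mp he) else v with hf
    have hspec : ∀ e ∈ E, (e : Set α) = insert (f e) {w | r (f e) w} := by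
      intro e he
      simp only [hf, dif_pos he]
      exact (Classical.choose_spec ((hE e).mp he)).2
    have := Finset.card_le_card_of_injOn (s := E.filter fun e => v ∈ e) (t := T) f ?_ ?_
    · rw [← hcard]; exact this
    · intro e he
      rw [Finset.mem_coe, Finset.mem_filter] at he
      have hv : v ∈ (e : Set α) := he.2
      rw [hspec e he.1] at hv
      rcases hv with hv | hv
      · exact hv ▸ hvT
      · exact hclosed _ _ hv hvT
    · intro e1 he1 e2 he2 heq
      rw [Finset.mem_coe, Finset.mem_filter] at he1 he2
      apply Finset.coe_injective
      rw [hspec e1 he1.1, hspec e2 he2.1, heq]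
  calc i = T.card := hcard.symm
    _ ≤ _ := Finset.card_le_card (fun v hvT => Finset.mem_filter.mpr ⟨Finset.mem_univ v, hdeg v hvT⟩)
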